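/- Suppose (n^{(k)}, e^{(k)}) is a sequence of solutions of the system e_i n_i = q_i + Σ_{j≠i} e_{ij} n_j (q : V → ℤ fixed, V finite) with all Q_{(Γ, e^{(k)})} negative definite, and suppose there is a vertex i₀ with n^{(k)}_{i₀} = max_i n^{(k)}_i → ∞ and for each i the ratio n^{(k)}_i / n^{(k)}_{i₀} converges to some ν_i ∈ [0,1]. Let P = {i : ν_i > 0} and let Γ' be the connected component of the subgraph spanned by P containing i₀. Then for each i ∈ Γ' the sequence e^{(k)}_i converges (hence is eventually constant, being integer-valued) to ε_i = (1/ν_i) Σ_{j∈Γ', j↔i} e_{ij} ν_j. -/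

import Mathlib

open Finset Filter
open scoped Classical

/-- Convergence of self-intersections along an unbounded sequence of solutions: if
`(n^{(k)}, e^{(k)})` are solutions of the adjunction system with negative definite
intersection forms, `n^{(k)} i₀` is maximal and tends to infinity, and the ratios
`n^{(k)} i / n^{(k)} i₀` converge to `ν i ∈ [0,1]`, then for every `i` in the connected
component `Γ'` containing `i₀` of the subgraph spanned by `P = {i | ν i > 0}`, the
sequence `e^{(k)} i` converges to `(1 / ν i) * ∑_{j ∈ Γ', j ↔ i} w i j * ν j`. -/
theorem stmt_18 {V : Type*} [Fintype V] [DecidableEq V]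
    (w : V → V → ℕ) (hsymm : ∀ i j, w i j = w j i) (hdiag : ∀ i, w i i = 0)
    (q : V → ℤ)
    (n e : ℕ → V → ℕ) (he : ∀ k i, 1 ≤ e k i)
    (hsol : ∀ k i, (e k i : ℤ) * n k i = q i + ∑ j ∈ univ.erase i, (w i j : ℤ) * n k j)
    (hneg : ∀ k, ∀ x : V → ℝ, x ≠ 0 →
      ∑ i, x i * (-(e k i : ℝ) * x i + ∑ j ∈ univ.erase i, (w i j : ℝ) * x j) < 0)
    (i₀ : V) (hmax : ∀ k i, n k i ≤ n k i₀)
    (htop : Tendsto (fun k => (n k i₀ : ℝ)) atTop atTop)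
    (ν : V → ℝ) (hν : ∀ i, ν i ∈ Set.Icc (0 : ℝ) 1)
    (hlim : ∀ i, Tendsto (fun k => (n k i : ℝ) / (n k i₀ : ℝ)) atTop (nhds (ν i))) :
    ∀ i, (SimpleGraph.fromRel (fun a b => 0 < w a b ∧ 0 < ν a ∧ 0 < ν b)).Reachable i₀ i →
      Tendsto (fun k => (e k i : ℝ)) atTop
        (nhds ((1 / ν i) * ∑ j ∈ univ.erase i,
          if (SimpleGraph.fromRel (fun a b => 0 < w a b ∧ 0 < ν a ∧ 0 < ν b)).Reachable i₀ j
          then (w i j : ℝ) * ν j else 0)) := by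
  set G := SimpleGraph.fromRel (fun a b => 0 < w a b ∧ 0 < ν a ∧ 0 < ν b) with hG
  have hpos0 : ∀ᶠ k in atTop, (1 : ℝ) ≤ (n k i₀ : ℝ) := htop.eventually_ge_atTop 1
  have hν₀ : ν i₀ = 1 := by
    have h1 : Tendsto (fun k => (n k i₀ : ℝ) / (n k i₀ : ℝ)) atTop (nhds 1) := by
      apply Tendsto.congr' _ tendsto_const_nhds
      filter_upwards [hpos0] with k hk
      rw [div_self (by linarith)]
    exact tendsto_nhds_unique (hlim i₀) h1
  have hadjν : ∀ {a b : V}, G.Adj a b → 0 < ν b := by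
    intro a b hab
    rw [hG, SimpleGraph.fromRel_adj] at hab
    rcases hab.2 with ⟨_, _, h⟩ | ⟨_, h, _⟩ <;> exact h
  have hwalkν : ∀ (a b : V), G.Walk a b → 0 < ν a → 0 < ν b := by
    intro a b p
    induction p with
    | nil => exact id
    | cons h p ih => intro _; exact ih (hadjν h)
  intro i hri
  have hνi : 0 < ν i := by
    obtain ⟨p⟩ := hri
    exact hwalkν i₀ i p (by rw [hν₀]; norm_num)
  set L : ℝ := ∑ j ∈ univ.erase i, (w i j : ℝ) * ν j with hL
  have hfL : Tendsto (fun k => (q i : ℝ) / (n k i₀ : ℝ) +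
      ∑ j ∈ univ.erase i, (w i j : ℝ) * ((n k j : ℝ) / (n k i₀ : ℝ)))
      atTop (nhds (0 + L)) := by
    apply Tendsto.add
    · exact tendsto_const_nhds.div_atTop htop
    · exact tendsto_finset_sum _ (fun j _ => (hlim j).const_mul _)
  have hratio : Tendsto (fun k => (n k i : ℝ) / (n k i₀ : ℝ)) atTop (nhds (ν i)) := hlim i
  have hevr : ∀ᶠ k in atTop, ν i / 2 < (n k i : ℝ) / (n k i₀ : ℝ) :=
    hratio.eventually (eventually_gt_nhds (half_lt_self hνi))
  have hev : ∀ᶠ k in atTop, (e k i : ℝ) =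
      ((q i : ℝ) / (n k i₀ : ℝ) +
        ∑ j ∈ univ.erase i, (w i j : ℝ) * ((n k j : ℝ) / (n k i₀ : ℝ))) /
      ((n k i : ℝ) / (n k i₀ : ℝ)) := by
    filter_upwards [hpos0, hevr] with k hk0 hk1
    have hn0 : (0 : ℝ) < (n k i₀ : ℝ) := by linarith
    have hr0 : (0 : ℝ) < (n k i : ℝ) / (n k i₀ : ℝ) := lt_trans (half_pos hνi) hk1
    have hni : (0 : ℝ) < (n k i : ℝ) := by
      by_contra h
      push_neg at h
      have h0 : (n k i : ℝ) = 0 := le_antisymm h (Nat.cast_nonneg _)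
      rw [h0, zero_div] at hr0
      exact lt_irrefl _ hr0
    have key : (e k i : ℝ) * (n k i : ℝ) =
        (q i : ℝ) + ∑ j ∈ univ.erase i, (w i j : ℝ) * (n k j : ℝ) := by
      exact_mod_cast hsol k i
    have hsum : ∑ j ∈ univ.erase i, (w i j : ℝ) * ((n k j : ℝ) / (n k i₀ : ℝ)) =
        (∑ j ∈ univ.erase i, (w i j : ℝ) * (n k j : ℝ)) / (n k i₀ : ℝ) := by
      rw [Finset.sum_div]
      exact Finset.sum_congr rfl fun j _ => (mul_div_assoc _ _ _).symm
    rw [hsum, ← add_div, div_div_div_cancel_right₀ hn0.ne', ← key,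
      mul_div_cancel_right₀ _ hni.ne']
  have hTend : Tendsto (fun k => (e k i : ℝ)) atTop (nhds ((0 + L) / ν i)) :=
    Tendsto.congr' (hev.mono fun k hk => hk.symm) (hfL.div hratio hνi.ne')
  have hLeq : L = ∑ j ∈ univ.erase i,
      if G.Reachable i₀ j then (w i j : ℝ) * ν j else 0 := by
    apply Finset.sum_congr rfl
    intro j hj
    have hji : j ≠ i := (Finset.mem_erase.1 hj).1
    split_ifs with h
    · rfl
    · rcases Nat.eq_zero_or_pos (w i j) with h0 | hw
      · simp [h0]
      · rcases eq_or_lt_of_le (hν j).1 with h0 | hνj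
        · simp [← h0]
        · exfalso
          apply h
          refine hri.trans (SimpleGraph.Adj.reachable ?_)
          rw [SimpleGraph.fromRel_adj]
          exact ⟨hji.symm, Or.inl ⟨hw, hνi, hνj⟩⟩
  have hval : (0 + L) / ν i = (1 / ν i) * ∑ j ∈ univ.erase i,
      if G.Reachable i₀ j then (w i j : ℝ) * ν j else 0 := by
    rw [zero_add, hLeq, one_div, div_eq_inv_mul]
  rwa [hval] at hTend
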